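/- Let J ∈ ℝ^{n×n} be invertible, b ∈ ℝⁿ, F(x) = Jx − b, and let B_0 ∈ ℝ^{n×n} be invertible. Generate x_{k+1} = x_k − B_k⁻¹ F(x_k) (each B_k assumed invertible), with s_k a standard basis vector maximizing ‖(B_k − J) e_i‖ over e_1, …, e_n, and B_{k+1} = AAA(B_k, J, s_k). Then for every k ≥ 0, ‖B_k − J‖_F² ≤ max{1 − k/n, 0} · ‖B_0 − J‖_F². Moreover, if k* is the first index such that (B_{k*} − J) s_{k*} = 0, then B_{k*} = J and F(x_{k*+1}) = 0. -/

import Mathlib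

open Matrix MeasureTheory ProbabilityTheory Finset

/-- Euclidean norm of a vector in ℝⁿ. -/
noncomputable def enorm' {n : ℕ} (v : Fin n → ℝ) : ℝ := Real.sqrt (∑ i, (v i) ^ 2)

/-- Frobenius norm of a real n×n matrix. -/
noncomputable def frob {n : ℕ} (A : Matrix (Fin n) (Fin n) ℝ) : ℝ :=
  Real.sqrt (∑ i, ∑ j, (A i j) ^ 2)

/-- Spectral (ℓ₂ operator) norm of a real n×n matrix. -/
noncomputable def opNorm' {n : ℕ} (A : Matrix (Fin n) (Fin n) ℝ) : ℝ :=
  ‖Matrix.toEuclideanCLM (𝕜 := ℝ) A‖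

/-- The AAA update: AAA(B,J,s) = B + ((J−B) s sᵀ (J−B)ᵀ / (sᵀ(J−B)ᵀ(J−B)s)) (J−B)
if (J−B)s ≠ 0, and B otherwise. -/
noncomputable def AAAupd {n : ℕ} (B J : Matrix (Fin n) (Fin n) ℝ) (s : Fin n → ℝ) :
    Matrix (Fin n) (Fin n) ℝ :=
  if (J - B).mulVec s = 0 then B
  else B + (((J - B).mulVec s) ⬝ᵥ ((J - B).mulVec s))⁻¹ •
      (Matrix.vecMulVec ((J - B).mulVec s) ((J - B).mulVec s) * (J - B))

/-- `s` is a standard basis vector maximizing ‖R e_i‖ over the standard basis. -/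
noncomputable def IsGreedy {n : ℕ} (R : Matrix (Fin n) (Fin n) ℝ) (s : Fin n → ℝ) : Prop :=
  ∃ i : Fin n, s = Pi.single i 1 ∧
    ∀ j : Fin n, enorm' (R.mulVec (Pi.single j 1)) ≤ enorm' (R.mulVec (Pi.single i 1))

/-- `P` is the orthogonal-projection matrix onto the subspace `V` of ℝⁿ
(symmetric, idempotent, range `V`, identity on `V`). -/
def IsOrthProj {n : ℕ} (P : Matrix (Fin n) (Fin n) ℝ) (V : Submodule ℝ (Fin n → ℝ)) : Prop :=
  P.IsSymm ∧ P * P = P ∧ (∀ v, P.mulVec v ∈ V) ∧ (∀ v ∈ V, P.mulVec v = v)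

/-- Standard Gaussian measure on ℝⁿ: the n-fold product of N(0,1). -/
noncomputable def stdGaussianPi (n : ℕ) : MeasureTheory.Measure (Fin n → ℝ) :=
  MeasureTheory.Measure.pi fun _ => ProbabilityTheory.gaussianReal 0 1

lemma enorm'_sq {n : ℕ} (v : Fin n → ℝ) : enorm' v ^ 2 = ∑ i, (v i)^2 := by
  rw [enorm', Real.sq_sqrt]; positivity

lemma frob_sq {n : ℕ} (A : Matrix (Fin n) (Fin n) ℝ) : frob A ^ 2 = ∑ i, ∑ j, (A i j)^2 := by
  rw [frob, Real.sq_sqrt]; positivity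

lemma enorm'_nonneg {n : ℕ} (v : Fin n → ℝ) : 0 ≤ enorm' v := Real.sqrt_nonneg _

lemma enorm'_eq_zero {n : ℕ} (v : Fin n → ℝ) : enorm' v = 0 ↔ v = 0 := by
  rw [enorm', Real.sqrt_eq_zero (by positivity)]
  constructor
  · intro h
    funext i
    have := (Finset.sum_eq_zero_iff_of_nonneg (fun i _ => by positivity)).mp h i (mem_univ i)
    exact pow_eq_zero_iff (by norm_num) |>.mp this
  · intro h; rw [h]; simp

lemma dot_self {n : ℕ} (v : Fin n → ℝ) : v ⬝ᵥ v = ∑ i, (v i)^2 := by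
  simp [dotProduct, sq]

lemma greedy_zero {n : ℕ} {R : Matrix (Fin n) (Fin n) ℝ} {s : Fin n → ℝ}
    (hg : IsGreedy R s) (hz : R.mulVec s = 0) : R = 0 := by
  obtain ⟨i, hsi, hmax⟩ := hg
  rw [hsi] at hz
  funext a c
  have hcol : R.mulVec (Pi.single c 1) = 0 := by
    have h := hmax c
    rw [hz] at h
    have h0 : enorm' (0 : Fin n → ℝ) = 0 := (enorm'_eq_zero _).mpr rfl
    rw [h0] at h
    exact (enorm'_eq_zero _).mp (le_antisymm h (enorm'_nonneg _))
  have := congrFun hcol a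
  simpa [Matrix.mulVec_single] using this

lemma step_key {n : ℕ} (R : Matrix (Fin n) (Fin n) ℝ) (i : Fin n)
    (hu : R.mulVec (Pi.single i 1) ≠ 0) :
    ∑ a, ∑ b, (R - ((R.mulVec (Pi.single i 1)) ⬝ᵥ (R.mulVec (Pi.single i 1)))⁻¹ •
      (vecMulVec (R.mulVec (Pi.single i 1)) (R.mulVec (Pi.single i 1)) * R)) a b ^ 2
    ≤ (∑ a, ∑ b, R a b ^ 2) - (R.mulVec (Pi.single i 1)) ⬝ᵥ (R.mulVec (Pi.single i 1)) := by
  set u : Fin n → ℝ := R.mulVec (Pi.single i 1) with hu_def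
  set c : ℝ := u ⬝ᵥ u with hc_def
  set w : Fin n → ℝ := fun b => ∑ a, u a * R a b with hw_def
  set M := R - c⁻¹ • (vecMulVec u u * R) with hM_def
  have hui : ∀ a, u a = R a i := by
    intro a; simp [hu_def, Matrix.mulVec_single]
  have hc : 0 < c := by
    rw [hc_def, dot_self]
    rcases Function.ne_iff.mp hu with ⟨a, ha⟩
    exact Finset.sum_pos' (fun j _ => sq_nonneg _)
      ⟨a, mem_univ a, lt_of_le_of_ne (sq_nonneg _) (Ne.symm (pow_ne_zero 2 ha))⟩
  have hwi : w i = c := by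
    rw [hw_def, hc_def, dot_self]
    exact Finset.sum_congr rfl fun a _ => by rw [hui a, sq]
  have hMab : ∀ a b, M a b = R a b - c⁻¹ * (u a * w b) := by
    intro a b
    simp only [hM_def, Matrix.sub_apply, Matrix.smul_apply, smul_eq_mul]
    have hh : (vecMulVec u u * R) a b = u a * w b := by
      simp only [Matrix.mul_apply, Matrix.vecMulVec_apply, hw_def, Finset.mul_sum]
      exact Finset.sum_congr rfl fun k _ => by ring
    rw [hh]
  have key : ∑ a, ∑ b, M a b ^2 = (∑ a, ∑ b, R a b^2) - c⁻¹ * ∑ b, (w b)^2 := by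
    rw [Finset.sum_comm, Finset.sum_comm (f := fun a b => R a b ^2)]
    have hb : ∀ b, ∑ a, M a b ^2 = (∑ a, R a b^2) - c⁻¹ * (w b)^2 := by
      intro b
      have h1 : ∑ a, M a b^2
          = ∑ a, (R a b^2 - (2*c⁻¹* w b) * (u a * R a b) + ((c⁻¹)^2 * w b^2) * u a^2) :=
        Finset.sum_congr rfl fun a _ => by rw [hMab a b]; ring
      rw [h1, Finset.sum_add_distrib, Finset.sum_sub_distrib, ← Finset.mul_sum, ← Finset.mul_sum]
      have h2 : (∑ a, (u a * R a b)) = w b := rfl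
      have h3 : (∑ a, u a^2) = c := (dot_self u).symm ▸ rfl
      rw [h2, h3]
      field_simp
      ring
    rw [Finset.sum_congr rfl fun b _ => hb b, Finset.sum_sub_distrib, ← Finset.mul_sum]
  rw [key]
  have hW : c^2 ≤ ∑ b, (w b)^2 := by
    calc c^2 = (w i)^2 := by rw [hwi]
    _ ≤ ∑ b, (w b)^2 :=
        Finset.single_le_sum (f := fun b => (w b)^2) (fun b _ => sq_nonneg _) (mem_univ i)
  have : c ≤ c⁻¹ * ∑ b, (w b)^2 := by
    calc c = c⁻¹ * c^2 := by field_simp [sq]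
    _ ≤ c⁻¹ * ∑ b, (w b)^2 := mul_le_mul_of_nonneg_left hW (by positivity)
  linarith

lemma AAA_triv {n : ℕ} (B J : Matrix (Fin n) (Fin n) ℝ) (s : Fin n → ℝ)
    (h : (B - J).mulVec s = 0) : AAAupd B J s = B := by
  rw [AAAupd, if_pos]
  rw [show J - B = -(B - J) from (neg_sub B J).symm, Matrix.neg_mulVec, h, neg_zero]

lemma AAA_R {n : ℕ} (B J : Matrix (Fin n) (Fin n) ℝ) (s : Fin n → ℝ)
    (h : (B - J).mulVec s ≠ 0) :
    AAAupd B J s - J = (B - J) - (((B - J).mulVec s) ⬝ᵥ ((B - J).mulVec s))⁻¹ •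
      (vecMulVec ((B - J).mulVec s) ((B - J).mulVec s) * (B - J)) := by
  have hJB : (J - B).mulVec s = -((B - J).mulVec s) := by
    rw [show J - B = -(B - J) from (neg_sub B J).symm, Matrix.neg_mulVec]
  rw [AAAupd, if_neg (by rw [hJB, neg_eq_zero]; exact h)]
  have hv : vecMulVec (-((B - J).mulVec s)) (-((B - J).mulVec s))
      = vecMulVec ((B - J).mulVec s) ((B - J).mulVec s) := by
    funext a c; simp [Matrix.vecMulVec_apply]
  rw [hJB, hv, show J - B = -(B - J) from (neg_sub B J).symm]
  rw [dotProduct_neg, neg_dotProduct, neg_neg, mul_neg, smul_neg]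
  abel

lemma step_zero_col {n : ℕ} (R : Matrix (Fin n) (Fin n) ℝ) (u x : Fin n → ℝ) (c : ℝ)
    (hx : R.mulVec x = 0) :
    (R - c • (vecMulVec u u * R)).mulVec x = 0 := by
  rw [Matrix.sub_mulVec, Matrix.smul_mulVec, ← Matrix.mulVec_mulVec, hx,
    Matrix.mulVec_zero, smul_zero, sub_zero]

lemma step_new_zero {n : ℕ} (R : Matrix (Fin n) (Fin n) ℝ) (s : Fin n → ℝ)
    (h : R.mulVec s ≠ 0) :
    (R - ((R.mulVec s) ⬝ᵥ (R.mulVec s))⁻¹ • (vecMulVec (R.mulVec s) (R.mulVec s) * R)).mulVec s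
      = 0 := by
  set u := R.mulVec s with hu
  have hc : u ⬝ᵥ u ≠ 0 := fun h0 => h ((dotProduct_self_eq_zero).mp h0)
  rw [Matrix.sub_mulVec, Matrix.smul_mulVec, ← Matrix.mulVec_mulVec, ← hu]
  have hvm : (vecMulVec u u).mulVec u = (u ⬝ᵥ u) • u := by
    funext a
    simp only [Matrix.mulVec, Matrix.vecMulVec_apply, Pi.smul_apply, smul_eq_mul,
      dotProduct, Finset.sum_mul]
    exact Finset.sum_congr rfl fun k _ => by ring
  rw [hvm, smul_smul, inv_mul_cancel₀ hc, one_smul, sub_self]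


theorem stmt_3 {n : ℕ} (hn : 0 < n)
    (J : Matrix (Fin n) (Fin n) ℝ) (hJ : IsUnit J) (b : Fin n → ℝ)
    (B0 : Matrix (Fin n) (Fin n) ℝ) (hB0inv : IsUnit B0)
    (x : ℕ → Fin n → ℝ) (B : ℕ → Matrix (Fin n) (Fin n) ℝ) (s : ℕ → Fin n → ℝ)
    (hB0 : B 0 = B0)
    (hBinv : ∀ t, IsUnit (B t))
    (hx : ∀ t, x (t + 1) = x t - (B t)⁻¹.mulVec (J.mulVec (x t) - b))
    (hgreedy : ∀ t, IsGreedy (B t - J) (s t))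
    (hBup : ∀ t, B (t + 1) = AAAupd (B t) J (s t)) :
    (∀ k : ℕ, frob (B k - J) ^ 2 ≤ max (1 - (k : ℝ) / n) 0 * frob (B0 - J) ^ 2) ∧
    (∀ kst : ℕ, (B kst - J).mulVec (s kst) = 0 →
      (∀ t < kst, (B t - J).mulVec (s t) ≠ 0) →
      B kst = J ∧ J.mulVec (x (kst + 1)) - b = 0) := by
  classical
  subst hB0
  -- zero-column counting
  set Z : ℕ → Finset (Fin n) :=
    fun t => Finset.univ.filter (fun i : Fin n => (B t - J).mulVec (Pi.single i 1) = 0) with hZ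
  have hRe : ∀ t, (B t - J).mulVec (s t) ≠ 0 →
      B (t+1) - J = (B t - J) - (((B t - J).mulVec (s t)) ⬝ᵥ ((B t - J).mulVec (s t)))⁻¹ •
        (vecMulVec ((B t - J).mulVec (s t)) ((B t - J).mulVec (s t)) * (B t - J)) := by
    intro t ht
    rw [hBup t]; exact AAA_R _ _ _ ht
  have hcount : ∀ t, (B t - J = 0) ∨ t ≤ (Z t).card := by
    intro t
    induction t with
    | zero => exact Or.inr (Nat.zero_le _)
    | succ t IH =>
      by_cases hz : (B t - J).mulVec (s t) = 0
      · left
        have hR0 : B t - J = 0 := greedy_zero (hgreedy t) hz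
        rw [hBup t, AAA_triv _ _ _ hz]; exact hR0
      · rcases IH with hR0 | hcard
        · exact absurd (by rw [hR0, Matrix.zero_mulVec]) hz
        · right
          obtain ⟨i, hsi, hmax⟩ := hgreedy t
          have hzi : i ∉ Z t := by
            simp only [hZ, mem_filter, mem_univ, true_and]
            rw [← hsi]; exact hz
          have hsub : insert i (Z t) ⊆ Z (t+1) := by
            intro j hj
            simp only [hZ, mem_filter, mem_univ, true_and]
            rcases Finset.mem_insert.mp hj with rfl | hj
            · rw [hRe t hz, ← hsi]
              exact step_new_zero _ _ hz
            · simp only [hZ, mem_filter, mem_univ, true_and] at hj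
              rw [hRe t hz]
              exact step_zero_col _ _ _ _ hj
          calc t + 1 ≤ (Z t).card + 1 := by omega
          _ = (insert i (Z t)).card := (Finset.card_insert_of_notMem hzi).symm
          _ ≤ (Z (t+1)).card := Finset.card_le_card hsub
  -- per-step descent
  have hdesc : ∀ t, frob (B (t+1) - J)^2
      ≤ frob (B t - J)^2 - enorm' ((B t - J).mulVec (s t))^2 := by
    intro t
    by_cases hz : (B t - J).mulVec (s t) = 0
    · rw [hBup t, AAA_triv _ _ _ hz, hz]
      have : enorm' (0 : Fin n → ℝ) = 0 := (enorm'_eq_zero _).mpr rfl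
      rw [this]
      simp
    · obtain ⟨i, hsi, hmax⟩ := hgreedy t
      rw [hRe t hz, frob_sq, frob_sq, hsi]
      have hz' : (B t - J).mulVec (Pi.single i 1) ≠ 0 := by rw [← hsi]; exact hz
      have := step_key (B t - J) i hz'
      rw [enorm'_sq, ← dot_self]
      exact this
  -- column bound
  have hcolbound : ∀ t, frob (B t - J)^2
      ≤ ((n - (Z t).card : ℕ) : ℝ) * enorm' ((B t - J).mulVec (s t))^2 := by
    intro t
    obtain ⟨i, hsi, hmax⟩ := hgreedy t
    have hcols : frob (B t - J)^2 = ∑ c, enorm' ((B t - J).mulVec (Pi.single c 1))^2 := by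
      rw [frob_sq, Finset.sum_comm]
      refine Finset.sum_congr rfl fun c _ => ?_
      rw [enorm'_sq]
      exact Finset.sum_congr rfl fun a _ => by rw [Matrix.mulVec_single_one, Matrix.col_apply]
    rw [hcols]
    set f : Fin n → ℝ := fun c => enorm' ((B t - J).mulVec (Pi.single c 1))^2 with hf
    have hsplit : ∑ c, f c = ∑ c ∈ Finset.univ.filter
        (fun c => ¬ (B t - J).mulVec (Pi.single c 1) = 0), f c := by
      rw [← Finset.sum_filter_add_sum_filter_not Finset.univ
        (fun c => (B t - J).mulVec (Pi.single c 1) = 0) f]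
      have : ∑ c ∈ Finset.univ.filter
          (fun c => (B t - J).mulVec (Pi.single c 1) = 0), f c = 0 := by
        refine Finset.sum_eq_zero fun c hc => ?_
        simp only [mem_filter] at hc
        rw [hf]
        simp only [hc.2]
        rw [(enorm'_eq_zero _).mpr rfl]
        ring
      rw [this, zero_add]
    rw [hsplit]
    have hbound : ∀ c ∈ Finset.univ.filter
        (fun c => ¬ (B t - J).mulVec (Pi.single c 1) = 0), f c
        ≤ enorm' ((B t - J).mulVec (s t))^2 := by
      intro c _
      rw [hf, hsi]
      exact pow_le_pow_left₀ (enorm'_nonneg _) (hmax c) 2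
    calc ∑ c ∈ Finset.univ.filter
          (fun c => ¬ (B t - J).mulVec (Pi.single c 1) = 0), f c
        ≤ (Finset.univ.filter (fun c => ¬ (B t - J).mulVec (Pi.single c 1) = 0)).card
          • enorm' ((B t - J).mulVec (s t))^2 := Finset.sum_le_card_nsmul _ _ _ hbound
      _ = ((Finset.univ.filter
            (fun c => ¬ (B t - J).mulVec (Pi.single c 1) = 0)).card : ℝ)
          * enorm' ((B t - J).mulVec (s t))^2 := nsmul_eq_mul _ _
      _ ≤ ((n - (Z t).card : ℕ) : ℝ) * enorm' ((B t - J).mulVec (s t))^2 := by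
          apply mul_le_mul_of_nonneg_right _ (by positivity)
          have hcards := Finset.card_filter_add_card_filter_not
            (s := (Finset.univ : Finset (Fin n)))
            (p := fun c => (B t - J).mulVec (Pi.single c 1) = 0)
          rw [Finset.card_univ, Fintype.card_fin] at hcards
          have : (Finset.univ.filter
              (fun c => ¬ (B t - J).mulVec (Pi.single c 1) = 0)).card
              = n - (Z t).card := by simp only [hZ]; omega
          rw [this]
  -- the main inequality
  have main : ∀ k : ℕ, frob (B k - J) ^ 2 ≤ max (1 - (k : ℝ) / n) 0 * frob (B 0 - J) ^ 2 := by
    intro k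
    induction k with
    | zero =>
      simp only [Nat.cast_zero, zero_div, sub_zero]
      rw [max_eq_left zero_le_one, one_mul]
    | succ k IH =>
      have hF0 : (0:ℝ) ≤ frob (B 0 - J)^2 := sq_nonneg _
      have hFk1 : (0:ℝ) ≤ frob (B (k+1) - J)^2 := sq_nonneg _
      have he : (0:ℝ) ≤ enorm' ((B k - J).mulVec (s k))^2 := sq_nonneg _
      have hN : (0:ℝ) < n := by exact_mod_cast hn
      by_cases hkn : k < n
      · -- nontrivial case
        have hmaxk : max (1 - (k:ℝ)/n) 0 = 1 - (k:ℝ)/n := by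
          apply max_eq_left
          rw [sub_nonneg, div_le_one hN]
          exact_mod_cast hkn.le
        have hmaxk1 : max (1 - ((k:ℝ)+1)/n) 0 = 1 - ((k:ℝ)+1)/n := by
          apply max_eq_left
          rw [sub_nonneg, div_le_one hN]
          exact_mod_cast hkn
        rcases hcount k with hR0 | hcard
        · have : frob (B k - J)^2 = 0 := by
            rw [hR0, frob_sq]; simp
          have h1 := hdesc k
          have : frob (B (k+1) - J)^2 ≤ 0 := by linarith
          have hrhs : 0 ≤ max (1 - ((k:ℝ)+1)/n) 0 * frob (B 0 - J)^2 :=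
            mul_nonneg (le_max_right _ _) hF0
          push_cast
          linarith
        · -- card (Z k) ≥ k
          have hcard' : (Z k).card ≤ n := by
            have h := Finset.card_le_univ (Z k)
            simpa using h
          have hcast : ((n - (Z k).card : ℕ) : ℝ) ≤ (n:ℝ) - k := by
            have : (n - (Z k).card : ℕ) ≤ n - k := by omega
            calc ((n - (Z k).card : ℕ) : ℝ) ≤ ((n - k : ℕ) : ℝ) := by exact_mod_cast this
            _ = (n:ℝ) - k := by
                rw [Nat.cast_sub hkn.le]
          set F := frob (B k - J)^2 with hF
          set F1 := frob (B (k+1) - J)^2 with hF1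
          set e := enorm' ((B k - J).mulVec (s k))^2 with hee
          set F0 := frob (B 0 - J)^2 with hF0'
          have h1 : F1 ≤ F - e := hdesc k
          have h2 : F ≤ ((n:ℝ) - k) * e := le_trans (hcolbound k)
            (mul_le_mul_of_nonneg_right hcast he)
          have h3 : F ≤ (1 - (k:ℝ)/n) * F0 := by rw [← hmaxk]; exact IH
          have hD : (1:ℝ) ≤ (n:ℝ) - k := by
            have : (k:ℝ) + 1 ≤ n := by exact_mod_cast hkn
            linarith
          push_cast
          rw [hmaxk1]
          -- want : F1 ≤ (1 - (k+1)/n) * F0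
          have hFnn : (0:ℝ) ≤ F := sq_nonneg _
          -- D * F1 ≤ (D-1) * F with D = n - k
          have hDF1 : ((n:ℝ) - k) * F1 ≤ ((n:ℝ) - k - 1) * F := by nlinarith
          have hNF : (n:ℝ) * F ≤ ((n:ℝ) - k) * F0 := by
            have := mul_le_mul_of_nonneg_left h3 hN.le
            calc (n:ℝ) * F ≤ (n:ℝ) * ((1 - (k:ℝ)/n) * F0) := this
            _ = ((n:ℝ) - k) * F0 := by field_simp
          have hfinal : (n:ℝ) * (((n:ℝ) - k) * F1) ≤ ((n:ℝ) - k) * (((n:ℝ) - k - 1) * F0) := by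
            calc (n:ℝ) * (((n:ℝ) - k) * F1) ≤ (n:ℝ) * (((n:ℝ) - k - 1) * F) :=
              mul_le_mul_of_nonneg_left hDF1 hN.le
            _ = ((n:ℝ) - k - 1) * ((n:ℝ) * F) := by ring
            _ ≤ ((n:ℝ) - k - 1) * (((n:ℝ) - k) * F0) :=
              mul_le_mul_of_nonneg_left hNF (by linarith)
            _ = ((n:ℝ) - k) * (((n:ℝ) - k - 1) * F0) := by ring
          have hDpos : (0:ℝ) < (n:ℝ) - k := by linarith
          have : (n:ℝ) * F1 ≤ ((n:ℝ) - k - 1) * F0 := by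
            have := (mul_le_mul_iff_right₀ hDpos).mp (by linarith [hfinal] :
              ((n:ℝ) - k) * ((n:ℝ) * F1) ≤ ((n:ℝ) - k) * (((n:ℝ) - k - 1) * F0))
            exact this
          have hgoal : F1 ≤ (1 - ((k:ℝ)+1)/n) * F0 := by
            rw [show (1 - ((k:ℝ)+1)/(n:ℝ)) = ((n:ℝ) - k - 1)/n by field_simp; ring]
            rw [div_mul_eq_mul_div, le_div_iff₀ hN]
            linarith [this]
          exact hgoal
      · -- k ≥ n : IH gives frob = 0
        have hmaxk : max (1 - (k:ℝ)/n) 0 = 0 := by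
          apply max_eq_right
          rw [sub_nonpos, le_div_iff₀ hN, one_mul]
          exact_mod_cast Nat.le_of_not_lt hkn
        rw [hmaxk, zero_mul] at IH
        have h1 := hdesc k
        have hrhs : 0 ≤ max (1 - ((k:ℝ)+1)/n) 0 * frob (B 0 - J)^2 :=
          mul_nonneg (le_max_right _ _) hF0
        push_cast
        linarith
  refine ⟨main, ?_⟩
  intro kst hz _
  have hR0 : B kst - J = 0 := greedy_zero (hgreedy kst) hz
  have hBk : B kst = J := by rwa [sub_eq_zero] at hR0
  refine ⟨hBk, ?_⟩
  rw [hx kst, hBk]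
  have hJd : IsUnit J.det := (Matrix.isUnit_iff_isUnit_det J).mp hJ
  rw [Matrix.mulVec_sub, Matrix.mulVec_mulVec, Matrix.mul_nonsing_inv J hJd,
    Matrix.one_mulVec]
  abel
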